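/- Let A be a Noetherian ring and I an ideal of A. The following are equivalent: (i) ⊕_{n≥0} (I^n)‾ T^n is a finitely generated module over the Rees algebra ⊕_{n≥0} I^n T^n; (ii) there exists an integer N such that I·(I^n)‾ = (I^{n+1})‾ for all n ≥ N. -/

import Mathlib

/-- `f` is integral over the ideal `I`: there is an equation
`f^k + a₁ f^(k-1) + ⋯ + a_k = 0` with `aᵢ ∈ Iⁱ` (and `k ≥ 1`). -/
def IsIntegralOverIdeal {A : Type*} [CommRing A] (I : Ideal A) (f : A) : Prop :=
  ∃ (k : ℕ) (a : ℕ → A), 0 < k ∧ (∀ i ∈ Finset.Icc 1 k, a i ∈ I ^ i) ∧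
    f ^ k + ∑ i ∈ Finset.Icc 1 k, a i * f ^ (k - i) = 0

lemma memJ_mul {A : Type*} [CommRing A] (I : Ideal A) (Jbar : ℕ → Ideal A)
    (hJbar : ∀ n : ℕ, ∀ f : A, f ∈ Jbar n ↔ IsIntegralOverIdeal (I ^ n) f)
    {d n : ℕ} {x f : A} (hx : x ∈ I ^ d) (hf : f ∈ Jbar n) : x * f ∈ Jbar (n + d) := by
  obtain ⟨k, a, hk, ha, heq⟩ := (hJbar n f).mp hf
  refine (hJbar (n + d) (x * f)).mpr ⟨k, fun i => x ^ i * a i, hk, ?_, ?_⟩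
  · intro i hi
    have h1 : x ^ i ∈ (I ^ d) ^ i := Ideal.pow_mem_pow hx i
    have h3 := Ideal.mul_mem_mul h1 (ha i hi)
    rw [← pow_mul, ← pow_mul, ← pow_add] at h3
    show x ^ i * a i ∈ (I ^ (n + d)) ^ i
    rw [← pow_mul]
    convert h3 using 2
    ring
  · have key : ∀ i ∈ Finset.Icc 1 k,
        x ^ i * a i * (x * f) ^ (k - i) = x ^ k * (a i * f ^ (k - i)) := by
      intro i hi
      have hik : i ≤ k := (Finset.mem_Icc.mp hi).2
      have hx2 : x ^ i * x ^ (k - i) = x ^ k := by rw [← pow_add, Nat.add_sub_cancel' hik]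
      rw [mul_pow, ← hx2]; ring
    show (x * f) ^ k + ∑ i ∈ Finset.Icc 1 k, x ^ i * a i * (x * f) ^ (k - i) = 0
    rw [Finset.sum_congr rfl key, ← Finset.mul_sum, mul_pow, ← mul_add, heq, mul_zero]

lemma powJ_le {A : Type*} [CommRing A] (I : Ideal A) (Jbar : ℕ → Ideal A)
    (hJbar : ∀ n : ℕ, ∀ f : A, f ∈ Jbar n ↔ IsIntegralOverIdeal (I ^ n) f)
    (d n : ℕ) : I ^ d * Jbar n ≤ Jbar (n + d) := by
  rw [Ideal.mul_le]
  exact fun x hx f hf => memJ_mul I Jbar hJbar hx hf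


open Polynomial in
/-- For a Noetherian ring `A` and ideal `I`, with `Jbar n = (Iⁿ)‾`:
`⊕ (Iⁿ)‾ Tⁿ` is a finitely generated module over the Rees algebra `⊕ Iⁿ Tⁿ`
iff there is an `N` with `I·(Iⁿ)‾ = (Iⁿ⁺¹)‾` for all `n ≥ N`. -/
theorem barRees_fg_iff_stable {A : Type*} [CommRing A] [IsNoetherianRing A]
    (I : Ideal A) (Jbar : ℕ → Ideal A)
    (hJbar : ∀ n : ℕ, ∀ f : A, f ∈ Jbar n ↔ IsIntegralOverIdeal (I ^ n) f) :
    (∃ s : Finset A[X],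
        (∀ p ∈ s, ∀ n : ℕ, p.coeff n ∈ Jbar n) ∧
        ∀ p : A[X], (∀ n : ℕ, p.coeff n ∈ Jbar n) →
          p ∈ Submodule.span (reesAlgebra I) (s : Set A[X])) ↔
    (∃ N : ℕ, ∀ n ≥ N, I * Jbar n = Jbar (n + 1)) := by
  constructor
  · rintro ⟨s, hs1, hs2⟩
    set N := s.sup (fun p => p.natDegree) with hN
    refine ⟨N, fun n hn => le_antisymm ?_ ?_⟩
    · have h := powJ_le I Jbar hJbar 1 n
      rwa [pow_one] at h
    · intro f hf
      have hc : ∀ m : ℕ, (monomial (n + 1) f).coeff m ∈ Jbar m := by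
        intro m
        rw [coeff_monomial]
        split
        · next h => subst h; exact hf
        · exact (Jbar m).zero_mem
      obtain ⟨c, -, hc2⟩ := Submodule.mem_span_finset.mp (hs2 _ hc)
      have : f = ∑ p ∈ s, ((c p : A[X]) * p).coeff (n + 1) := by
        rw [← finset_sum_coeff]
        have : ∑ p ∈ s, (c p : A[X]) * p = ∑ p ∈ s, c p • p := rfl
        rw [this, hc2, coeff_monomial]
        simp
      rw [this]
      refine Submodule.sum_mem _ (fun p hp => ?_)
      rw [coeff_mul]
      refine Submodule.sum_mem _ (fun x hx => ?_)
      rcases eq_or_ne (p.coeff x.2) 0 with h0 | h0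
      · rw [h0, mul_zero]; exact (I * Jbar n).zero_mem
      · have hdeg : x.2 ≤ p.natDegree := le_natDegree_of_ne_zero h0
        have hdN : p.natDegree ≤ N := Finset.le_sup hp
        have hsum : x.1 + x.2 = n + 1 := Finset.HasAntidiagonal.mem_antidiagonal.mp hx
        have hx1 : 1 ≤ x.1 := by omega
        have hm1 : (c p : A[X]).coeff x.1 ∈ I ^ x.1 :=
          (mem_reesAlgebra_iff _ _).mp (c p).2 x.1
        have hm2 : p.coeff x.2 ∈ Jbar x.2 := hs1 p hp x.2
        have hle : I ^ x.1 * Jbar x.2 ≤ I * Jbar n := by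
          have e1 : I ^ x.1 = I * I ^ (x.1 - 1) := by
            rw [← pow_succ']
            congr 1
            omega
          rw [e1, mul_assoc]
          refine Ideal.mul_mono_right ?_
          have := powJ_le I Jbar hJbar (x.1 - 1) x.2
          have e2 : x.2 + (x.1 - 1) = n := by omega
          rwa [e2] at this
        exact hle (Ideal.mul_mem_mul hm1 hm2)
  · rintro ⟨N, hN⟩
    classical
    have hfg : ∀ m : ℕ, ∃ S : Finset A, Ideal.span ↑S = Jbar m :=
      fun m => IsNoetherian.noetherian (Jbar m)
    choose G hG using hfg
    refine ⟨(Finset.range (N + 1)).biUnion (fun m => (G m).image (fun g => monomial m g)),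
      ?_, ?_⟩
    · intro p hp n
      simp only [Finset.mem_biUnion, Finset.mem_image, Finset.mem_range] at hp
      obtain ⟨m, _, g, hg, rfl⟩ := hp
      by_cases h : n = m
      · rw [coeff_monomial, if_pos h.symm, h, ← hG m]
        exact Ideal.subset_span hg
      · rw [coeff_monomial, if_neg (Ne.symm h)]
        exact (Jbar n).zero_mem
    · set s : Finset A[X] :=
        (Finset.range (N + 1)).biUnion (fun m => (G m).image (fun g => monomial m g)) with hs
      intro p hp
      have base : ∀ n, n ≤ N → ∀ f ∈ Jbar n,
          monomial n f ∈ Submodule.span (reesAlgebra I) (s : Set A[X]) := by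
        intro n hn f hf
        rw [← hG n] at hf
        refine Submodule.span_induction (p := fun f _ =>
          monomial n f ∈ Submodule.span (reesAlgebra I) (s : Set A[X])) ?_ ?_ ?_ ?_ hf
        · intro g hg
          refine Submodule.subset_span ?_
          simp only [hs, Finset.coe_biUnion, Finset.coe_image, Set.mem_iUnion]
          exact ⟨n, by simp [Nat.lt_succ_of_le hn], ⟨g, hg, rfl⟩⟩
        · show (monomial n (0:A)) ∈ _
          rw [map_zero]; exact Submodule.zero_mem _
        · intro a b _ _ ha hb
          show (monomial n (a + b)) ∈ _
          rw [map_add]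
          exact Submodule.add_mem _ ha hb
        · intro a b _ hb
          show (monomial n (a • b)) ∈ _
          have hCa : C a ∈ reesAlgebra I := by
            rw [Polynomial.C_eq_algebraMap]
            exact Subalgebra.algebraMap_mem _ a
          have : monomial n (a • b) = (⟨C a, hCa⟩ : reesAlgebra I) • monomial n b := by
            show monomial n (a * b) = C a * monomial n b
            rw [C_mul_monomial]
          rw [this]
          exact Submodule.smul_mem _ _ hb
      have claim : ∀ n, ∀ f ∈ Jbar n,
          monomial n f ∈ Submodule.span (reesAlgebra I) (s : Set A[X]) := by
        intro n
        induction n with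
        | zero => exact base 0 (Nat.zero_le N)
        | succ m ih =>
          by_cases hmN : m + 1 ≤ N
          · exact base (m + 1) hmN
          · intro f hf
            have hm : m ≥ N := by omega
            rw [← hN m hm] at hf
            refine Submodule.mul_induction_on hf ?_ ?_
            · intro x hx y hy
              have hmon : monomial 1 x ∈ reesAlgebra I :=
                reesAlgebra.monomial_mem.mpr (by rwa [pow_one])
              have : monomial (m + 1) (x * y) =
                  (⟨monomial 1 x, hmon⟩ : reesAlgebra I) • monomial m y := by
                show monomial (m + 1) (x * y) = monomial 1 x * monomial m y
                rw [monomial_mul_monomial, Nat.add_comm 1 m]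
              rw [this]
              exact Submodule.smul_mem _ _ (ih y hy)
            · intro a b ha hb
              rw [map_add]
              exact Submodule.add_mem _ ha hb
      have hsum : (∑ i ∈ p.support, monomial i (p.coeff i)) ∈
          Submodule.span (reesAlgebra I) (s : Set A[X]) :=
        Submodule.sum_mem _ (fun i _ => claim i _ (hp i))
      rwa [← p.as_sum_support] at hsum
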